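/- Given the Riccati equation B'(τ) = (1/2)λ²(z² − z) − (κξ − ρ̃ελz) B(τ) + (1/2)ε² B(τ)², with constant coefficients on an interval and initial value B(τⱼ), the function B(τ) = B(τⱼ) + ((μ + ν − ε²B(τⱼ))(1 − e^{ν(τ−τⱼ)})) / (ε²(1 − gⱼ e^{ν(τ−τⱼ)})), where μ = κξ − ρ̃ελz, ν = √(μ² − λ²ε²(z² − z)), and gⱼ = (μ + ν − ε²B(τⱼ))/(μ − ν − ε²B(τⱼ)), solves this ODE on the interval (assuming the denominator does not vanish). -/

import Mathlib

set_option maxHeartbeats 1600000 in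
private lemma riccati_alg2 (μ ν e Bj E D : ℂ) (he : e ≠ 0) (hD : D ≠ 0)
    (hDD : D = (μ - ν - e ^ 2 * Bj) - (μ + ν - e ^ 2 * Bj) * E) :
    (μ ^ 2 - ν ^ 2) / (2 * e ^ 2) -
      μ * (Bj + (μ + ν - e ^ 2 * Bj) * (1 - E) * (μ - ν - e ^ 2 * Bj) / (e ^ 2 * D)) +
      1 / 2 * e ^ 2 *
        (Bj + (μ + ν - e ^ 2 * Bj) * (1 - E) * (μ - ν - e ^ 2 * Bj) / (e ^ 2 * D)) ^ 2 =
    ν * E * (μ + ν - e ^ 2 * Bj) * ((μ + ν - e ^ 2 * Bj) * (1 - E) - D) *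
      (μ - ν - e ^ 2 * Bj) / (e ^ 2 * D ^ 2) := by
  field_simp [he, hD]
  subst hDD
  ring

set_option maxHeartbeats 1600000 in
private lemma riccati_alg (μ ν e Bj E : ℂ) (he : e ≠ 0)
    (hd : μ - ν - e ^ 2 * Bj ≠ 0)
    (hden : 1 - (μ + ν - e ^ 2 * Bj) / (μ - ν - e ^ 2 * Bj) * E ≠ 0) :
    (μ ^ 2 - ν ^ 2) / (2 * e ^ 2) -
      μ * (Bj + (μ + ν - e ^ 2 * Bj) * (1 - E) /
        (e ^ 2 * (1 - (μ + ν - e ^ 2 * Bj) / (μ - ν - e ^ 2 * Bj) * E))) +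
      1 / 2 * e ^ 2 * (Bj + (μ + ν - e ^ 2 * Bj) * (1 - E) /
        (e ^ 2 * (1 - (μ + ν - e ^ 2 * Bj) / (μ - ν - e ^ 2 * Bj) * E))) ^ 2 =
    ((μ + ν - e ^ 2 * Bj) * (-(ν * E)) *
        (e ^ 2 * (1 - (μ + ν - e ^ 2 * Bj) / (μ - ν - e ^ 2 * Bj) * E)) -
      (μ + ν - e ^ 2 * Bj) * (1 - E) *
        (e ^ 2 * (-((μ + ν - e ^ 2 * Bj) / (μ - ν - e ^ 2 * Bj) * (ν * E))))) /
      (e ^ 2 * (1 - (μ + ν - e ^ 2 * Bj) / (μ - ν - e ^ 2 * Bj) * E)) ^ 2 := by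
  set A : ℂ := μ + ν - e ^ 2 * Bj with hA
  set d : ℂ := μ - ν - e ^ 2 * Bj with hd'
  set D : ℂ := d - A * E with hDD
  have key : 1 - A / d * E = D / d := by
    rw [hDD]; field_simp
  have hD : D ≠ 0 := fun h => hden (by rw [key, h, zero_div])
  rw [key]
  have h1 : A * (1 - E) / (e ^ 2 * (D / d)) = A * (1 - E) * d / (e ^ 2 * D) := by
    rw [div_eq_div_iff (by simp [he, hD, hd, div_ne_zero] : e ^ 2 * (D / d) ≠ 0)
      (by simp [he, hD] : e ^ 2 * D ≠ 0)]
    field_simp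
  rw [h1]
  have h2 : (A * (-(ν * E)) * (e ^ 2 * (D / d)) -
      A * (1 - E) * (e ^ 2 * (-(A / d * (ν * E))))) / (e ^ 2 * (D / d)) ^ 2 =
      ν * E * A * (A * (1 - E) - D) * d / (e ^ 2 * D ^ 2) := by
    rw [div_eq_div_iff (by simp [he, hD, hd, div_ne_zero] : (e ^ 2 * (D / d)) ^ 2 ≠ 0)
      (by simp [he, hD] : e ^ 2 * D ^ 2 ≠ 0)]
    field_simp
    ring
  rw [h2]
  exact riccati_alg2 μ ν e Bj E D he hD (by rw [hDD])

/-- The closed-form function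
`B(τ) = B(τⱼ) + ((μ + ν − ε²B(τⱼ))(1 − e^{ν(τ−τⱼ)}))/(ε²(1 − gⱼ e^{ν(τ−τⱼ)}))`
solves the constant-coefficient Riccati equation
`B' = (1/2)lam²(z² − z) − (κξ − ρ̃εlamz)B + (1/2)ε²B²` wherever the denominator
does not vanish. -/
theorem riccati_closed_form_solves_ode
    (κ ε lam ξ ρ' : ℝ) (z Bj μ ν g : ℂ) (τj : ℝ)
    (hε : ε ≠ 0) (hν : ν ≠ 0)
    (hμ : μ = (κ : ℂ) * ξ - ρ' * ε * lam * z)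
    (hνsq : ν ^ 2 = μ ^ 2 - (lam : ℂ) ^ 2 * (ε : ℂ) ^ 2 * (z ^ 2 - z))
    (hgden : μ - ν - (ε : ℂ) ^ 2 * Bj ≠ 0)
    (hg : g = (μ + ν - (ε : ℂ) ^ 2 * Bj) / (μ - ν - (ε : ℂ) ^ 2 * Bj))
    (B : ℝ → ℂ)
    (hB : ∀ τ : ℝ, B τ = Bj + ((μ + ν - (ε : ℂ) ^ 2 * Bj) *
        (1 - Complex.exp (ν * (τ - τj)))) /
        ((ε : ℂ) ^ 2 * (1 - g * Complex.exp (ν * (τ - τj)))))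
    (τ : ℝ) (hden : 1 - g * Complex.exp (ν * (τ - τj)) ≠ 0) :
    HasDerivAt B
      ((1 / 2 : ℂ) * (lam : ℂ) ^ 2 * (z ^ 2 - z) - μ * B τ +
        (1 / 2 : ℂ) * (ε : ℂ) ^ 2 * (B τ) ^ 2) τ := by
  have hε' : (ε : ℂ) ≠ 0 := Complex.ofReal_ne_zero.mpr hε
  set A : ℂ := μ + ν - (ε : ℂ) ^ 2 * Bj with hA
  -- derivative of the exponential part
  have hexp : HasDerivAt (fun t : ℝ => Complex.exp (ν * (t - τj)))
      (ν * Complex.exp (ν * (τ - τj))) τ := by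
    have h1 : HasDerivAt (fun t : ℝ => ν * ((t : ℂ) - (τj : ℂ))) ν τ := by
      have h0 : HasDerivAt (fun t : ℝ => ((t : ℂ) - (τj : ℂ))) 1 τ := by
        simpa using (Complex.ofRealCLM.hasDerivAt (x := τ)).sub_const (τj : ℂ)
      simpa using h0.const_mul ν
    simpa [mul_comm] using h1.cexp
  set E : ℂ := Complex.exp (ν * (τ - τj)) with hE
  -- derivative of the full closed form
  have hnum : HasDerivAt (fun t : ℝ => A * (1 - Complex.exp (ν * (t - τj))))
      (A * (-(ν * E))) τ := by
    simpa using (((hasDerivAt_const τ (1 : ℂ)).sub hexp)).const_mul A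
  have hdenf : HasDerivAt (fun t : ℝ => (ε : ℂ) ^ 2 * (1 - g * Complex.exp (ν * (t - τj))))
      ((ε : ℂ) ^ 2 * (-(g * (ν * E)))) τ := by
    simpa using (((hasDerivAt_const τ (1 : ℂ)).sub (hexp.const_mul g))).const_mul ((ε : ℂ) ^ 2)
  have hden' : (ε : ℂ) ^ 2 * (1 - g * E) ≠ 0 := mul_ne_zero (pow_ne_zero 2 hε') hden
  have hdiv := hnum.div hdenf hden'
  have hBd : HasDerivAt B
      ((A * (-(ν * E)) * ((ε : ℂ) ^ 2 * (1 - g * E)) -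
        A * (1 - E) * ((ε : ℂ) ^ 2 * (-(g * (ν * E))))) /
        ((ε : ℂ) ^ 2 * (1 - g * E)) ^ 2) τ := by
    have : HasDerivAt (fun t : ℝ => Bj + (A * (1 - Complex.exp (ν * (t - τj)))) /
        ((ε : ℂ) ^ 2 * (1 - g * Complex.exp (ν * (t - τj)))))
        ((A * (-(ν * E)) * ((ε : ℂ) ^ 2 * (1 - g * E)) -
          A * (1 - E) * ((ε : ℂ) ^ 2 * (-(g * (ν * E))))) /
          ((ε : ℂ) ^ 2 * (1 - g * E)) ^ 2) τ := by
      have h := (hasDerivAt_const τ Bj).add hdiv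
      rw [zero_add] at h
      exact h
    exact this.congr_of_eventuallyEq (Filter.Eventually.of_forall fun t => (hB t))
  -- now show the derivative value matches the Riccati RHS
  convert hBd using 1
  have hlz : 1 / 2 * (lam : ℂ) ^ 2 * (z ^ 2 - z) = (μ ^ 2 - ν ^ 2) / (2 * (ε : ℂ) ^ 2) := by
    rw [eq_div_iff (by simp [hε'] : (2 * (ε : ℂ) ^ 2) ≠ 0)]
    linear_combination hνsq
  have hden2 : 1 - (μ + ν - (ε : ℂ) ^ 2 * Bj) / (μ - ν - (ε : ℂ) ^ 2 * Bj) * E ≠ 0 := by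
    rw [hg] at hden; exact hden
  rw [hB τ, hlz, hg, ← hE]
  exact riccati_alg μ ν (ε : ℂ) Bj E hε' hgden hden2
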